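/- In ℤ[x] with I = (2, x²+x), for every i ≥ 2 the element a_i = x^i(x+1)^i has a τ_I-factorization into τ_I-atoms of length 2, namely a_i = (x(x+1)^{i-1})·(x^{i-1}(x+1)), and a τ_I-factorization into τ_I-atoms of length i, namely a_i = (x(x+1))^i written as the product of i copies of the atom x(x+1). -/

import Mathlib

open Polynomial
open scoped ENNReal

variable {R : Type*} [CommRing R]

/-- `a = λ b₁ ⋯ b_k` with `λ` a unit, `k ≥ 1`, and all `bᵢ` pairwise congruent mod `I`. -/
def IsTauFactorization (I : Ideal R) (a : R) (L : List R) : Prop :=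
  L ≠ [] ∧ (∃ u : R, IsUnit u ∧ a = u * L.prod) ∧
    ∀ b ∈ L, ∀ c ∈ L, Ideal.Quotient.mk I b = Ideal.Quotient.mk I c

/-- A `τ_I`-atom: a nonzero nonunit whose only `τ_I`-factorizations have length one. -/
def IsTauAtom (I : Ideal R) (a : R) : Prop :=
  a ≠ 0 ∧ ¬ IsUnit a ∧ ∀ L : List R, IsTauFactorization I a L → L.length = 1

/-- A `τ_I`-factorization into `τ_I`-atoms. -/
def IsTauAtomicFactorization (I : Ideal R) (a : R) (L : List R) : Prop :=
  IsTauFactorization I a L ∧ ∀ b ∈ L, IsTauAtom I b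

/-- An element is `τ_I`-atomic if it has a `τ_I`-factorization into `τ_I`-atoms. -/
def IsTauAtomic (I : Ideal R) (a : R) : Prop :=
  ∃ L : List R, IsTauAtomicFactorization I a L

/-- The `τ_I`-elasticity of an element: `sup{k/l}` over pairs of atomic `τ_I`-factorizations. -/
noncomputable def tauElasticity (I : Ideal R) (a : R) : ℝ≥0∞ :=
  sSup {r : ℝ≥0∞ | ∃ L₁ L₂ : List R, IsTauAtomicFactorization I a L₁ ∧
    IsTauAtomicFactorization I a L₂ ∧
    r = (L₁.length : ℝ≥0∞) / (L₂.length : ℝ≥0∞)}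

/-- The `τ_I`-elasticity of the ring: the supremum over `τ_I`-atomic elements. -/
noncomputable def tauRingElasticity (I : Ideal R) : ℝ≥0∞ :=
  ⨆ a ∈ {a : R | IsTauAtomic I a}, tauElasticity I a


private lemma even_eval_of_mem {s : ℤ} (hs : s ^ 2 + s = 0) {p : ℤ[X]}
    (hp : p ∈ Ideal.span ({2, X ^ 2 + X} : Set ℤ[X])) : (2 : ℤ) ∣ p.eval s := by
  rw [Ideal.mem_span_pair] at hp
  obtain ⟨a, b, hab⟩ := hp
  have h := congrArg (eval s) hab
  simp only [eval_add, eval_mul, eval_pow, eval_X, eval_ofNat] at h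
  exact ⟨a.eval s, by rw [← h, hs]; ring⟩

private lemma tau_length_one {s : ℤ} (hs : s ^ 2 + s = 0) {g a : ℤ[X]}
    (hg : ¬ (2 : ℤ) ∣ g.eval s) (ha : a = (X - C s) * g)
    (L : List ℤ[X])
    (hL : IsTauFactorization (Ideal.span ({2, X ^ 2 + X} : Set ℤ[X])) a L) :
    L.length = 1 := by
  obtain ⟨hne, ⟨u, hu, hprod⟩, hcong⟩ := hL
  by_contra hlen
  have h2 : 2 ≤ L.length := by
    rcases L with _ | ⟨b, t⟩
    · exact absurd rfl hne
    · rcases t with _ | ⟨c, t'⟩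
      · exact absurd rfl hlen
      · simp only [List.length_cons]; omega
  have haev : a.eval s = 0 := by
    rw [ha, eval_mul, eval_sub, eval_X, eval_C, sub_self, zero_mul]
  have hu' : IsUnit (u.eval s) := hu.map (evalRingHom s)
  have hprodev : (L.map (eval s)).prod = 0 := by
    have h := congrArg (eval s) hprod
    rw [haev, eval_mul, eval_list_prod] at h
    rcases mul_eq_zero.mp h.symm with h' | h'
    · exact absurd h' hu'.ne_zero
    · exact h'
  have h0 : (0 : ℤ) ∈ L.map (eval s) := (List.prod_eq_zero_iff).mp hprodev
  obtain ⟨b, hbL, hb0⟩ := List.mem_map.mp h0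
  obtain ⟨c, hc⟩ := dvd_iff_isRoot.mpr hb0
  have hperm := List.perm_cons_erase hbL
  have hps : L.prod = b * (L.erase b).prod := by
    rw [hperm.prod_eq]; exact List.prod_cons
  have hX : (X - C s : ℤ[X]) ≠ 0 := X_sub_C_ne_zero s
  have key : (X - C s) * g = (X - C s) * (u * (c * (L.erase b).prod)) := by
    rw [← ha, hprod, hps, hc]; ring
  have hg' : g = u * (c * (L.erase b).prod) := mul_left_cancel₀ hX key
  have hrne : L.erase b ≠ [] := by
    have := List.length_erase_of_mem hbL
    intro h; rw [h] at this; simp at this; omega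
  obtain ⟨b', hb'⟩ := List.exists_mem_of_ne_nil _ hrne
  have hb'L : b' ∈ L := List.mem_of_mem_erase hb'
  have hmem : b' - b ∈ Ideal.span ({2, X ^ 2 + X} : Set ℤ[X]) :=
    Ideal.Quotient.eq.mp (hcong b' hb'L b hbL)
  have hdvd : (2 : ℤ) ∣ b'.eval s := by
    have := even_eval_of_mem hs hmem
    rw [eval_sub, hb0, sub_zero] at this
    exact this
  have hdvdp : (2 : ℤ) ∣ ((L.erase b).map (eval s)).prod :=
    hdvd.trans (List.dvd_prod (List.mem_map_of_mem hb'))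
  apply hg
  rw [hg', eval_mul, eval_mul, eval_list_prod]
  exact (hdvdp.mul_left _).mul_left _

private lemma not_unit_of_even {a : ℤ[X]} (h : (2 : ℤ) ∣ a.eval 1) : ¬ IsUnit a := by
  intro hu
  have h1 := hu.map (evalRingHom 1)
  rw [coe_evalRingHom] at h1
  rcases Int.isUnit_iff.mp h1 with h' | h' <;> rw [h'] at h <;> omega

private lemma atom_x_mul (j : ℕ) :
    IsTauAtom (Ideal.span ({2, X ^ 2 + X} : Set ℤ[X])) (X * (X + 1) ^ (j + 1)) := by
  have heval : (X * (X + 1) ^ (j + 1) : ℤ[X]).eval 1 = 2 ^ (j + 1) := by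
    simp
  refine ⟨?_, ?_, ?_⟩
  · intro h
    rw [h, eval_zero] at heval
    exact absurd heval.symm (pow_ne_zero _ two_ne_zero)
  · exact not_unit_of_even (by rw [heval]; exact dvd_pow_self 2 (Nat.succ_ne_zero j))
  · intro L hL
    refine tau_length_one (s := 0) (by norm_num) (g := (X + 1) ^ (j + 1)) ?_ ?_ L hL
    · simp
    · rw [C_0, sub_zero]

private lemma atom_xpow_mul (j : ℕ) :
    IsTauAtom (Ideal.span ({2, X ^ 2 + X} : Set ℤ[X])) (X ^ (j + 1) * (X + 1)) := by
  refine ⟨?_, ?_, ?_⟩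
  · intro h
    have := congrArg (eval 1) h
    simp at this
  · exact not_unit_of_even (by simp)
  · intro L hL
    refine tau_length_one (s := -1) (by norm_num) (g := X ^ (j + 1)) ?_ ?_ L hL
    · rw [eval_pow, eval_X]
      rcases Nat.even_or_odd (j + 1) with h | h
      · rw [h.neg_one_pow]; decide
      · rw [h.neg_one_pow]; decide
    · rw [map_neg, C_1, sub_neg_eq_add]; ring

private lemma xx1_mem : (X * (X + 1) : ℤ[X]) ∈ Ideal.span ({2, X ^ 2 + X} : Set ℤ[X]) := by
  have h : (X * (X + 1) : ℤ[X]) = X ^ 2 + X := by ring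
  rw [h]
  exact Ideal.subset_span (Set.mem_insert_of_mem _ rfl)

/-- In `ℤ[x]` with `I = (2, x²+x)`, for every `i ≥ 2` the element
`aᵢ = x^i (x+1)^i` has an atomic `τ_I`-factorization of length `2`, namely
`[x(x+1)^{i-1}, x^{i-1}(x+1)]`, and one of length `i`, namely `i` copies of `x(x+1)`. -/
theorem stmt_15 :
    ∀ i : ℕ, 2 ≤ i →
      IsTauAtomicFactorization (Ideal.span ({2, X ^ 2 + X} : Set ℤ[X]))
        (X ^ i * (X + 1) ^ i)
        [X * (X + 1) ^ (i - 1), X ^ (i - 1) * (X + 1)] ∧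
      IsTauAtomicFactorization (Ideal.span ({2, X ^ 2 + X} : Set ℤ[X]))
        (X ^ i * (X + 1) ^ i)
        (List.replicate i (X * (X + 1))) := by
  intro i hi
  obtain ⟨j, rfl⟩ : ∃ j, i = j + 2 := ⟨i - 2, by omega⟩
  have hsub : j + 2 - 1 = j + 1 := by omega
  rw [hsub]
  have h1 : (X * (X + 1) ^ (j + 1) : ℤ[X]) ∈ Ideal.span ({2, X ^ 2 + X} : Set ℤ[X]) := by
    have h : (X * (X + 1) ^ (j + 1) : ℤ[X]) = (X * (X + 1)) * (X + 1) ^ j := by ring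
    rw [h]; exact Ideal.mul_mem_right _ _ xx1_mem
  have h2 : (X ^ (j + 1) * (X + 1) : ℤ[X]) ∈ Ideal.span ({2, X ^ 2 + X} : Set ℤ[X]) := by
    have h : (X ^ (j + 1) * (X + 1) : ℤ[X]) = (X * (X + 1)) * X ^ j := by ring
    rw [h]; exact Ideal.mul_mem_right _ _ xx1_mem
  constructor
  · refine ⟨⟨by simp, ⟨1, isUnit_one, ?_⟩, ?_⟩, ?_⟩
    · simp only [List.prod_cons, List.prod_nil]; ring
    · intro b hb c hc
      simp only [List.mem_cons, List.not_mem_nil, or_false] at hb hc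
      have e1 := Ideal.Quotient.eq_zero_iff_mem.mpr h1
      have e2 := Ideal.Quotient.eq_zero_iff_mem.mpr h2
      rcases hb with rfl | rfl <;> rcases hc with rfl | rfl <;> simp [e1, e2]
    · intro b hb
      simp only [List.mem_cons, List.not_mem_nil, or_false] at hb
      rcases hb with rfl | rfl
      · exact atom_x_mul j
      · exact atom_xpow_mul j
  · refine ⟨⟨by simp, ⟨1, isUnit_one, ?_⟩, ?_⟩, ?_⟩
    · rw [List.prod_replicate, mul_pow, one_mul]
    · intro b hb c hc
      rw [List.eq_of_mem_replicate hb, List.eq_of_mem_replicate hc]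
    · intro b hb
      rw [List.eq_of_mem_replicate hb]
      have := atom_x_mul 0
      rwa [pow_one] at this
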